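/- Let 𝔤 be a 3-dimensional real Lie algebra which is not unimodular (i.e., there is x ∈ 𝔤 with tr(ad_x) ≠ 0), let 𝔤₀ := {x ∈ 𝔤 : tr(ad_x) = 0} be its unimodular kernel, and let B be a nondegenerate symmetric bilinear form on 𝔤 whose restriction to 𝔤₀ is nondegenerate (𝔤₀ ∩ 𝔤₀^⊥ = 0). If (J₊,J₋,X₊,X₋,H,F) is a B₃-Kähler datum on (𝔤,B), then H = 0, F = 0, and there exist a B-orthogonal basis (w₁,w₂,w₃) of 𝔤, real numbers δ ≠ 0 and signs ε, ε' ∈ {±1} such that [w₁,w₂] = w₂, [w₁,w₃] = [w₂,w₃] = 0 (so 𝔤 ≅ ℝ ⊕ 𝔰𝔬𝔩₂), B(w₁,w₁) = ε/δ², B(w₂,w₂) = ε', B(w₃,w₃) = 1, X₋ = w₃ and X₊ = ±w₃. -/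

import Mathlib

set_option maxHeartbeats 2000000 in
/-- Proposition 6.4 ('only if' direction): on a 3-dimensional non-unimodular metric Lie
algebra `(𝔤,B)` whose unimodular kernel `𝔤₀ = ker(tr ∘ ad)` satisfies
`𝔤₀ ∩ 𝔤₀^⊥ = 0`, a `B₃`-Kähler datum `(J₊,J₋,X₊,X₋,H,F)` forces `H = 0`, `F = 0`,
and `𝔤` has a `B`-orthogonal basis `(w₁,w₂,w₃)` with `[w₁,w₂] = w₂`,
`[w₁,w₃] = [w₂,w₃] = 0`, `B(w₁,w₁) = ε/δ²`, `B(w₂,w₂) = ε'`, `B(w₃,w₃) = 1`,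
`X₋ = w₃` and `X₊ = ±w₃`. -/
theorem stmt_9 {𝔤 : Type*} [LieRing 𝔤] [LieAlgebra ℝ 𝔤] [FiniteDimensional ℝ 𝔤]
    (hdim : Module.finrank ℝ 𝔤 = 3)
    (hnonuni : ∃ x : 𝔤, LinearMap.trace ℝ 𝔤 (LieAlgebra.ad ℝ 𝔤 x) ≠ 0)
    (B : LinearMap.BilinForm ℝ 𝔤)
    (hBsymm : ∀ x y, B x y = B y x)
    (hBnd : ∀ x, (∀ y, B x y = 0) → x = 0)
    -- B restricts nondegenerately to the unimodular kernel: 𝔤₀ ∩ 𝔤₀^⊥ = 0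
    (h𝔤₀nd : ∀ x : 𝔤, LinearMap.trace ℝ 𝔤 (LieAlgebra.ad ℝ 𝔤 x) = 0 →
      (∀ y : 𝔤, LinearMap.trace ℝ 𝔤 (LieAlgebra.ad ℝ 𝔤 y) = 0 → B x y = 0) → x = 0)
    -- Levi-Civita product
    (N : 𝔤 → 𝔤 → 𝔤)
    (hK : ∀ x y z, 2 * B (N x y) z = B ⁅x, y⁆ z - B ⁅y, z⁆ x + B ⁅z, x⁆ y)
    -- B₃-Kähler datum
    (Jp Jm : 𝔤 →ₗ[ℝ] 𝔤) (Xp Xm : 𝔤)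
    (hJpskew : ∀ x y, B (Jp x) y = - B x (Jp y))
    (hJmskew : ∀ x y, B (Jm x) y = - B x (Jm y))
    (hXp : B Xp Xp = 1) (hXm : B Xm Xm = 1)
    (hJpXp : Jp Xp = 0) (hJmXm : Jm Xm = 0)
    (hJp2 : ∀ x, Jp (Jp x) = -x + B x Xp • Xp)
    (hJm2 : ∀ x, Jm (Jm x) = -x + B x Xm • Xm)
    (H : AlternatingMap ℝ 𝔤 ℝ (Fin 3)) (F : AlternatingMap ℝ 𝔤 ℝ (Fin 2))
    (hdF : ∀ x y z : 𝔤, -F ![⁅x, y⁆, z] + F ![⁅x, z⁆, y] - F ![⁅y, z⁆, x] = 0)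
    (hFXm : ∀ y : 𝔤, F ![Xm, y] = 0)
    (Hs : 𝔤 → 𝔤 → 𝔤) (hHs : ∀ x y z, B (Hs x y) z = H ![x, y, z])
    (Fs : 𝔤 → 𝔤) (hFs : ∀ x y, B (Fs x) y = F ![x, y])
    (hNXm : ∀ x, N x Xm = (-(1 / 2 : ℝ)) • Hs x Xm)
    (hNXp : ∀ x, N x Xp = (-(1 / 2 : ℝ)) • Hs Xp x - Jp (Fs x)) :
    H = 0 ∧ F = 0 ∧
    ∃ (w : Module.Basis (Fin 3) ℝ 𝔤) (δ ε ε' : ℝ),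
      δ ≠ 0 ∧ (ε = 1 ∨ ε = -1) ∧ (ε' = 1 ∨ ε' = -1) ∧
      (∀ i j, i ≠ j → B (w i) (w j) = 0) ∧
      ⁅w 0, w 1⁆ = w 1 ∧ ⁅w 0, w 2⁆ = 0 ∧ ⁅w 1, w 2⁆ = 0 ∧
      B (w 0) (w 0) = ε / δ ^ 2 ∧ B (w 1) (w 1) = ε' ∧ B (w 2) (w 2) = 1 ∧
      Xm = w 2 ∧ (Xp = w 2 ∨ Xp = -w 2) := by
  classical
  obtain ⟨x₀, hx₀⟩ := hnonuni
  set τ : 𝔤 →ₗ[ℝ] ℝ :=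
    (LinearMap.trace ℝ 𝔤).comp (LieAlgebra.ad ℝ 𝔤 : 𝔤 →ₗ[ℝ] Module.End ℝ 𝔤) with hτdef
  have hττ : ∀ x : 𝔤, τ x = LinearMap.trace ℝ 𝔤 (LieAlgebra.ad ℝ 𝔤 x) := fun x => rfl
  -- alternating swap helpers
  have hH01 : ∀ x y z : 𝔤, H ![y, x, z] = -H ![x, y, z] := by
    intro x y z
    have h := H.map_swap (v := ![x, y, z]) (i := 0) (j := 1) (by decide)
    have e : ![x, y, z] ∘ Equiv.swap (0 : Fin 3) 1 = ![y, x, z] := by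
      funext k; fin_cases k <;> simp [Equiv.swap_apply_def]
    rw [e] at h; exact h
  have hH12 : ∀ x y z : 𝔤, H ![x, z, y] = -H ![x, y, z] := by
    intro x y z
    have h := H.map_swap (v := ![x, y, z]) (i := 1) (j := 2) (by decide)
    have e : ![x, y, z] ∘ Equiv.swap (1 : Fin 3) 2 = ![x, z, y] := by
      funext k; fin_cases k <;> simp [Equiv.swap_apply_def]
    rw [e] at h; exact h
  have hH02 : ∀ x y z : 𝔤, H ![z, y, x] = -H ![x, y, z] := by
    intro x y z
    have h := H.map_swap (v := ![x, y, z]) (i := 0) (j := 2) (by decide)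
    have e : ![x, y, z] ∘ Equiv.swap (0 : Fin 3) 2 = ![z, y, x] := by
      funext k; fin_cases k <;> simp [Equiv.swap_apply_def]
    rw [e] at h; exact h
  have hFsw : ∀ x y : 𝔤, F ![y, x] = -F ![x, y] := by
    intro x y
    have h := F.map_swap (v := ![x, y]) (i := 0) (j := 1) (by decide)
    have e : ![x, y] ∘ Equiv.swap (0 : Fin 2) 1 = ![y, x] := by
      funext k; fin_cases k <;> simp [Equiv.swap_apply_def]
    rw [e] at h; exact h
  have hlieswap : ∀ x y : 𝔤, ⁅x, y⁆ = -⁅y, x⁆ := fun x y => (neg_eq_iff_eq_neg.mp (lie_skew y x))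
  have hBneg : ∀ x y z : 𝔤, B ⁅x, y⁆ z = - B ⁅y, x⁆ z := by
    intro x y z; rw [hlieswap x y, map_neg, LinearMap.neg_apply]
  -- E1 : Koszul identity for ∇ X₋
  have hE1 : ∀ x z : 𝔤, B ⁅x, Xm⁆ z - B ⁅Xm, z⁆ x + B ⁅z, x⁆ Xm = -H ![x, Xm, z] := by
    intro x z
    have h := hK x Xm z
    rw [hNXm x] at h
    rw [show B ((-(1 / 2 : ℝ)) • Hs x Xm) z = -(1 / 2) * B (Hs x Xm) z by
      simp [LinearMap.smul_apply]] at h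
    rw [hHs] at h
    linarith
  -- (A) : ad_{X₋} is B-skew
  have hA : ∀ x z : 𝔤, B ⁅x, Xm⁆ z + B ⁅z, Xm⁆ x = 0 := by
    intro x z
    have h1 := hE1 x z
    have h2 := hE1 z x
    have hs : H ![z, Xm, x] = -H ![x, Xm, z] := hH02 x Xm z
    have hb1 : B ⁅Xm, z⁆ x = - B ⁅z, Xm⁆ x := hBneg Xm z x
    have hb2 : B ⁅Xm, x⁆ z = - B ⁅x, Xm⁆ z := hBneg Xm x z
    have hb3 : B ⁅x, z⁆ Xm = - B ⁅z, x⁆ Xm := hBneg x z Xm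
    linarith
  -- (B) : H(x, X₋, z) = B([x,z], X₋)
  have hB3 : ∀ x z : 𝔤, H ![x, Xm, z] = B ⁅x, z⁆ Xm := by
    intro x z
    have h1 := hE1 x z
    have ha := hA x z
    have hb1 : B ⁅Xm, z⁆ x = - B ⁅z, Xm⁆ x := hBneg Xm z x
    have hb2 : B ⁅z, x⁆ Xm = - B ⁅x, z⁆ Xm := hBneg z x Xm
    linarith
  ---- Part 1 : find u₀ ∈ 𝔤₀ ∩ Xm^⊥, u₀ ≠ 0
  obtain ⟨u₀, hu₀mem, hu₀ne⟩ :
      ∃ u₀ ∈ LinearMap.ker (τ.prod (B.flip Xm)), u₀ ≠ 0 := by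
    apply (Submodule.ne_bot_iff _).mp
    intro hbot
    have hinj : Function.Injective (τ.prod (B.flip Xm)) := LinearMap.ker_eq_bot.mp hbot
    have hle := LinearMap.finrank_le_finrank_of_injective hinj
    rw [hdim] at hle
    simp [Module.finrank_self] at hle
  have hu₀ : τ u₀ = 0 ∧ B u₀ Xm = 0 := by
    have h := LinearMap.mem_ker.mp hu₀mem
    rw [LinearMap.prod_apply] at h
    constructor
    · exact congrArg Prod.fst h
    · have := congrArg Prod.snd h
      simpa [LinearMap.flip_apply] using this
  -- B(u₀,u₀) ≠ 0 via Jm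
  have hu₀u₀ : B u₀ u₀ ≠ 0 := by
    intro h0
    set v := Jm u₀ with hv
    have hvm : B v Xm = 0 := by rw [hv, hJmskew u₀ Xm, hJmXm]; simp
    have huv : B u₀ v = 0 := by
      have h1 : B v u₀ = - B u₀ v := hJmskew u₀ u₀
      have h2 := hBsymm u₀ v
      linarith
    have hvv : B v v = 0 := by
      have h1 : B v v = - B u₀ (Jm v) := hJmskew u₀ v
      rw [hv, hJm2 u₀] at h1
      simp only [map_add, map_neg, map_smul, smul_eq_mul] at h1
      rw [h0, hu₀.2] at h1
      simpa using h1
    have hJmv : Jm v = -u₀ := by rw [hv, hJm2 u₀, hu₀.2]; simp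
    have li : LinearIndependent ℝ ![u₀, v, Xm] := by
      rw [Fintype.linearIndependent_iff]
      intro g hg
      rw [Fin.sum_univ_three] at hg
      simp only [Matrix.cons_val_zero, Matrix.cons_val_one, Matrix.head_cons,
        Matrix.cons_val_two, Matrix.tail_cons] at hg
      have h2 : g 2 = 0 := by
        have := congrArg (fun y => B y Xm) hg
        simpa [map_add, map_smul, smul_eq_mul, hu₀.2, hvm, hXm] using this
      have hg' : g 0 • u₀ + g 1 • v = 0 := by
        rw [h2] at hg; simpa using hg
      have hg'' : g 0 • v - g 1 • u₀ = 0 := by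
        have h3 : Jm (g 0 • u₀ + g 1 • v) = Jm 0 := congrArg Jm hg'
        rw [map_add, map_smul, map_smul, hJmv, map_zero, ← hv, smul_neg] at h3
        rw [sub_eq_add_neg]; exact h3
      have e1 : (g 0 * g 0 + g 1 * g 1) • u₀
          = g 0 • (g 0 • u₀ + g 1 • v) - g 1 • (g 0 • v - g 1 • u₀) := by
        module
      rw [hg', hg''] at e1
      simp only [smul_zero, sub_zero] at e1
      have hsum : g 0 * g 0 + g 1 * g 1 = 0 := by
        rcases smul_eq_zero.mp e1 with h | h
        · exact h
        · exact absurd h hu₀ne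
      have h0' : g 0 = 0 := by
        have n0 := mul_self_nonneg (g 0)
        have n1 := mul_self_nonneg (g 1)
        have : g 0 * g 0 = 0 := by linarith
        exact mul_self_eq_zero.mp this
      have h1' : g 1 = 0 := by
        have n0 := mul_self_nonneg (g 0)
        have n1 := mul_self_nonneg (g 1)
        have : g 1 * g 1 = 0 := by linarith
        exact mul_self_eq_zero.mp this
      intro i; fin_cases i <;> assumption
    have hcard : Fintype.card (Fin 3) = Module.finrank ℝ 𝔤 := by simp [hdim]
    set b1 := basisOfLinearIndependentOfCardEqFinrank li hcard with hb1def
    have hb1 : ⇑b1 = ![u₀, v, Xm] := coe_basisOfLinearIndependentOfCardEqFinrank li hcard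
    have hb10 : b1 0 = u₀ := by rw [hb1]; rfl
    have hb11 : b1 1 = v := by rw [hb1]; rfl
    have hb12 : b1 2 = Xm := by rw [hb1]; rfl
    have hBu₀ : (B u₀) = (0 : 𝔤 →ₗ[ℝ] ℝ) := by
      apply b1.ext
      intro i
      fin_cases i
      · show B u₀ (b1 0) = 0
        rw [hb10]; exact h0
      · show B u₀ (b1 1) = 0
        rw [hb11]; exact huv
      · show B u₀ (b1 2) = 0
        rw [hb12]; exact hu₀.2
    exact hu₀ne (hBnd u₀ (fun y => by rw [hBu₀]; rfl))
  -- normalize u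
  set t := Real.sqrt |B u₀ u₀| with ht
  have ht0 : 0 < t := Real.sqrt_pos.mpr (abs_pos.mpr hu₀u₀)
  have ht2 : t ^ 2 = |B u₀ u₀| := Real.sq_sqrt (abs_nonneg _)
  set u := t⁻¹ • u₀ with hu
  have htne : t ≠ 0 := ne_of_gt ht0
  have huu' : B u u = B u₀ u₀ / t ^ 2 := by
    rw [hu]
    simp only [map_smul, LinearMap.smul_apply, smul_eq_mul]
    rw [eq_div_iff (pow_ne_zero 2 htne), pow_two]
    field_simp
  set ε' := B u u with hε'def
  have hε'pm : ε' = 1 ∨ ε' = -1 := by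
    rcases lt_or_gt_of_ne hu₀u₀ with h | h
    · right
      rw [huu', ht2, abs_of_neg h, div_neg, div_self hu₀u₀]
    · left
      rw [huu', ht2, abs_of_pos h, div_self hu₀u₀]
  have hε'ne : ε' ≠ 0 := by rcases hε'pm with h | h <;> rw [h] <;> norm_num
  clear_value ε'
  have hτu : τ u = 0 := by rw [hu, map_smul, hu₀.1]; simp
  have humXm : B u Xm = 0 := by
    rw [hu]; simp only [map_smul, LinearMap.smul_apply, smul_eq_mul]; rw [hu₀.2]; ring
  clear_value u
  ---- Part 2 : e ⊥ u, Xm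
  obtain ⟨e, hemem, hene⟩ :
      ∃ e ∈ LinearMap.ker ((B.flip u).prod (B.flip Xm)), e ≠ 0 := by
    apply (Submodule.ne_bot_iff _).mp
    intro hbot
    have hinj : Function.Injective ((B.flip u).prod (B.flip Xm)) := LinearMap.ker_eq_bot.mp hbot
    have hle := LinearMap.finrank_le_finrank_of_injective hinj
    rw [hdim] at hle
    simp [Module.finrank_self] at hle
  have heortho : B e u = 0 ∧ B e Xm = 0 := by
    have h := LinearMap.mem_ker.mp hemem
    rw [LinearMap.prod_apply] at h
    constructor
    · have := congrArg Prod.fst h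
      simpa [LinearMap.flip_apply] using this
    · have := congrArg Prod.snd h
      simpa [LinearMap.flip_apply] using this
  have heu : B e u = 0 := heortho.1
  have heXm : B e Xm = 0 := heortho.2
  have hue : B u e = 0 := by rw [hBsymm]; exact heu
  have hXme : B Xm e = 0 := by rw [hBsymm]; exact heXm
  have hXmu : B Xm u = 0 := by rw [hBsymm]; exact humXm
  -- linear independence helper
  have indep : ∀ x : 𝔤, x ≠ 0 → B x u = 0 → B x Xm = 0 →
      LinearIndependent ℝ ![x, u, Xm] := by
    intro x hxne hxu hxm
    rw [Fintype.linearIndependent_iff]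
    intro g hg
    rw [Fin.sum_univ_three] at hg
    simp only [Matrix.cons_val_zero, Matrix.cons_val_one, Matrix.head_cons,
      Matrix.cons_val_two, Matrix.tail_cons] at hg
    have h2 : g 2 = 0 := by
      have := congrArg (fun y => B y Xm) hg
      simpa [map_add, map_smul, smul_eq_mul, hxm, humXm, hXm] using this
    have h1 : g 1 = 0 := by
      have h : g 1 * ε' = 0 := by
        have := congrArg (fun y => B y u) hg
        simpa [map_add, map_smul, smul_eq_mul, hxu, ← hε'def, hXmu] using this
      exact (mul_eq_zero.mp h).resolve_right hε'ne
    have h0 : g 0 = 0 := by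
      rw [h1, h2] at hg
      simp only [zero_smul, add_zero] at hg
      rcases smul_eq_zero.mp hg with h | h
      · exact h
      · exact absurd h hxne
    intro i; fin_cases i <;> assumption
  have hcard : Fintype.card (Fin 3) = Module.finrank ℝ 𝔤 := by simp [hdim]
  have li3 := indep e hene heu heXm
  set w₀ := basisOfLinearIndependentOfCardEqFinrank li3 hcard with hw₀def
  have hw₀ : ⇑w₀ = ![e, u, Xm] := coe_basisOfLinearIndependentOfCardEqFinrank li3 hcard
  have hw0e : w₀ 0 = e := by rw [hw₀]; rfl
  have hw1u : w₀ 1 = u := by rw [hw₀]; rfl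
  have hw2m : w₀ 2 = Xm := by rw [hw₀]; rfl
  set β := B e e with hβdef
  have hβ : β ≠ 0 := by
    intro h0
    apply hene
    apply hBnd
    intro y
    have hBe : (B e) = (0 : 𝔤 →ₗ[ℝ] ℝ) := by
      apply w₀.ext
      intro i
      fin_cases i
      · show B e (w₀ 0) = 0
        rw [hw0e, ← hβdef, h0]
      · show B e (w₀ 1) = 0
        rw [hw1u]; exact heu
      · show B e (w₀ 2) = 0
        rw [hw2m]; exact heXm
    rw [hBe]; rfl
  clear_value β
  -- coordinate lemma
  have coord : ∀ y : 𝔤, y = (B y e / β) • e + (B y u / ε') • u + (B y Xm) • Xm := by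
    intro y
    have hzero : ∀ z, B (y - ((B y e / β) • e + (B y u / ε') • u + (B y Xm) • Xm)) z = 0 := by
      have hBd : (B (y - ((B y e / β) • e + (B y u / ε') • u + (B y Xm) • Xm)))
          = (0 : 𝔤 →ₗ[ℝ] ℝ) := by
        apply w₀.ext
        intro i
        fin_cases i
        · show B _ (w₀ 0) = 0
          rw [hw0e]
          simp only [map_sub, map_add, map_smul, smul_eq_mul, LinearMap.sub_apply,
            LinearMap.add_apply, LinearMap.smul_apply]
          rw [← hβdef, hue, hXme]
          field_simp
          ring
        · show B _ (w₀ 1) = 0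
          rw [hw1u]
          simp only [map_sub, map_add, map_smul, smul_eq_mul, LinearMap.sub_apply,
            LinearMap.add_apply, LinearMap.smul_apply]
          rw [heu, ← hε'def, hXmu]
          field_simp
          ring
        · show B _ (w₀ 2) = 0
          rw [hw2m]
          simp only [map_sub, map_add, map_smul, smul_eq_mul, LinearMap.sub_apply,
            LinearMap.add_apply, LinearMap.smul_apply]
          rw [heXm, humXm, hXm]
          ring
      intro z; rw [hBd]; rfl
    have hd0 := hBnd _ hzero
    exact (sub_eq_zero.mp hd0)
  -- bracket components
  have hBeXme : B ⁅e, Xm⁆ e = 0 := by have := hA e e; linarith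
  have hBeXmXm : B ⁅e, Xm⁆ Xm = 0 := by
    have := hA e Xm
    have h2 : B ⁅Xm, Xm⁆ e = 0 := by rw [lie_self]; simp
    linarith
  have hBuXmu : B ⁅u, Xm⁆ u = 0 := by have := hA u u; linarith
  have hBuXmXm : B ⁅u, Xm⁆ Xm = 0 := by
    have := hA u Xm
    have h2 : B ⁅Xm, Xm⁆ u = 0 := by rw [lie_self]; simp
    linarith
  set c := B ⁅e, Xm⁆ u / ε' with hcdef
  set c' := B ⁅u, Xm⁆ e / β with hc'def
  have heXmbr : ⁅e, Xm⁆ = c • u := by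
    have h := coord ⁅e, Xm⁆
    rw [hBeXme, hBeXmXm] at h
    simpa using h
  have huXmbr : ⁅u, Xm⁆ = c' • e := by
    have h := coord ⁅u, Xm⁆
    rw [hBuXmu, hBuXmXm] at h
    simpa using h
  clear_value c c'
  have hcc' : c * ε' + c' * β = 0 := by
    have h := hA e u
    rw [heXmbr, huXmbr] at h
    simp only [map_smul, LinearMap.smul_apply, smul_eq_mul] at h
    rw [← hε'def, ← hβdef] at h
    linarith
  set a₁ := B ⁅e, u⁆ e / β with ha₁def
  set a := B ⁅e, u⁆ u / ε' with hadef
  set b := B ⁅e, u⁆ Xm with hbdef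
  have heubr : ⁅e, u⁆ = a₁ • e + a • u + b • Xm := coord ⁅e, u⁆
  clear_value a₁ a b
  -- trace formula
  have htr : ∀ x : 𝔤, τ x = w₀.repr ⁅x, e⁆ 0 + w₀.repr ⁅x, u⁆ 1 + w₀.repr ⁅x, Xm⁆ 2 := by
    intro x
    rw [hττ, LinearMap.trace_eq_matrix_trace ℝ w₀, Matrix.trace_fin_three]
    simp only [LinearMap.toMatrix_apply, hw0e, hw1u, hw2m, LieAlgebra.ad_apply]
  have hrepr0 : ∀ (c₁ c₂ c₃ : ℝ), w₀.repr (c₁ • e + c₂ • u + c₃ • Xm) 0 = c₁ := by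
    intro c₁ c₂ c₃
    rw [show e = w₀ 0 from hw0e.symm, show u = w₀ 1 from hw1u.symm,
      show Xm = w₀ 2 from hw2m.symm]
    simp [Finsupp.single_apply]
  have hrepr1 : ∀ (c₁ c₂ c₃ : ℝ), w₀.repr (c₁ • e + c₂ • u + c₃ • Xm) 1 = c₂ := by
    intro c₁ c₂ c₃
    rw [show e = w₀ 0 from hw0e.symm, show u = w₀ 1 from hw1u.symm,
      show Xm = w₀ 2 from hw2m.symm]
    simp [Finsupp.single_apply]
  have hrepr2 : ∀ (c₁ c₂ c₃ : ℝ), w₀.repr (c₁ • e + c₂ • u + c₃ • Xm) 2 = c₃ := by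
    intro c₁ c₂ c₃
    rw [show e = w₀ 0 from hw0e.symm, show u = w₀ 1 from hw1u.symm,
      show Xm = w₀ 2 from hw2m.symm]
    simp [Finsupp.single_apply]
  have ha₁0 : a₁ = 0 := by
    have h := htr u
    rw [hτu] at h
    have r1 : w₀.repr ⁅u, e⁆ 0 = -a₁ := by
      rw [hlieswap u e, heubr]
      rw [show -(a₁ • e + a • u + b • Xm) = (-a₁) • e + (-a) • u + (-b) • Xm by module]
      exact hrepr0 _ _ _
    have r2 : w₀.repr ⁅u, u⁆ 1 = 0 := by rw [lie_self]; simp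
    have r3 : w₀.repr ⁅u, Xm⁆ 2 = 0 := by
      rw [huXmbr, show c' • e = c' • e + (0:ℝ) • u + (0:ℝ) • Xm by simp]
      exact hrepr2 _ _ _
    rw [r1, r2, r3] at h
    linarith
  have hτe : τ e = a := by
    have h := htr e
    have r1 : w₀.repr ⁅e, e⁆ 0 = 0 := by rw [lie_self]; simp
    have r2 : w₀.repr ⁅e, u⁆ 1 = a := by rw [heubr]; exact hrepr1 _ _ _
    have r3 : w₀.repr ⁅e, Xm⁆ 2 = 0 := by
      rw [heXmbr, show c • u = (0:ℝ) • e + c • u + (0:ℝ) • Xm by simp]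
      exact hrepr2 _ _ _
    rw [r1, r2, r3] at h; linarith
  have hτm : τ Xm = 0 := by
    have h := htr Xm
    have r1 : w₀.repr ⁅Xm, e⁆ 0 = 0 := by
      rw [hlieswap Xm e, heXmbr, show -(c • u) = (0:ℝ) • e + (-c) • u + (0:ℝ) • Xm by simp]
      exact hrepr0 _ _ _
    have r2 : w₀.repr ⁅Xm, u⁆ 1 = 0 := by
      rw [hlieswap Xm u, huXmbr, show -(c' • e) = (-c') • e + (0:ℝ) • u + (0:ℝ) • Xm by simp]
      exact hrepr1 _ _ _
    have r3 : w₀.repr ⁅Xm, Xm⁆ 2 = 0 := by rw [lie_self]; simp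
    rw [r1, r2, r3] at h; linarith
  have ha : a ≠ 0 := by
    intro ha0
    apply hx₀
    rw [← hττ]
    have hx := coord x₀
    calc τ x₀ = τ ((B x₀ e / β) • e + (B x₀ u / ε') • u + (B x₀ Xm) • Xm) := by rw [← hx]
    _ = (B x₀ e / β) * τ e + (B x₀ u / ε') * τ u + (B x₀ Xm) * τ Xm := by
        simp [map_add, map_smul, smul_eq_mul]
    _ = 0 := by rw [hτe, hτu, hτm, ha0]; ring
  have heubr' : ⁅e, u⁆ = a • u + b • Xm := by rw [heubr, ha₁0]; simp
  have hc'0 : c' = 0 := by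
    have hL : ⁅⁅e,u⁆, Xm⁆ = (a * c') • e := by
      rw [heubr', add_lie, smul_lie, smul_lie, lie_self, smul_zero, add_zero, huXmbr, smul_smul]
    have hR : ⁅e, ⁅u,Xm⁆⁆ - ⁅u, ⁅e,Xm⁆⁆ = 0 := by
      rw [huXmbr, heXmbr, lie_smul, lie_smul, lie_self, lie_self, smul_zero, smul_zero, sub_zero]
    have h := lie_lie e u Xm
    rw [hL, hR] at h
    rcases smul_eq_zero.mp h with h' | h'
    · exact (mul_eq_zero.mp h').resolve_left ha
    · exact absurd h' hene
  have hc0 : c = 0 := by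
    have h : c * ε' = 0 := by rw [hc'0] at hcc'; linarith
    exact (mul_eq_zero.mp h).resolve_right hε'ne
  have heXm0 : ⁅e, Xm⁆ = 0 := by rw [heXmbr, hc0]; simp
  have huXm0 : ⁅u, Xm⁆ = 0 := by rw [huXmbr, hc'0]; simp
  have hXme0 : ⁅Xm, e⁆ = 0 := by rw [hlieswap, heXm0]; simp
  have hXmu0 : ⁅Xm, u⁆ = 0 := by rw [hlieswap, huXm0]; simp
  have hcent : ∀ x : 𝔤, ⁅x, Xm⁆ = 0 := by
    intro x
    conv_lhs => rw [coord x]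
    rw [add_lie, add_lie, smul_lie, smul_lie, smul_lie, heXm0, huXm0, lie_self]
    simp
  ---- Part 4 : F component lemmas
  have hJpB0 : ∀ x : 𝔤, B (Jp x) x = 0 := by
    intro x
    have h1 := hJpskew x x
    have h2 := hBsymm x (Jp x)
    linarith
  have hFee : F ![e, e] = 0 :=
    F.map_eq_zero_of_eq ![e, e] (by simp) (by decide : (0 : Fin 2) ≠ 1)
  have hFuu : F ![u, u] = 0 :=
    F.map_eq_zero_of_eq ![u, u] (by simp) (by decide : (0 : Fin 2) ≠ 1)
  have hFue : F ![u, e] = -F ![e, u] := hFsw e u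
  have hFem : F ![e, Xm] = 0 := by rw [hFsw Xm e, hFXm e]; ring
  have hFum : F ![u, Xm] = 0 := by rw [hFsw Xm u, hFXm u]; ring
  set f := F ![e, u] with hfdef
  have hFxe : ∀ x : 𝔤, F ![x, e] = -(B x u / ε') * f := by
    intro x
    rw [hFsw e x, ← hFs e x]
    have hx : B (Fs e) x = (B x u / ε') * f := by
      conv_lhs => rw [coord x]
      simp only [map_add, map_smul, smul_eq_mul]
      rw [hFs e e, hFs e u, hFs e Xm, hFee, hFem]
      ring
    rw [hx]
    ring
  have hFxu : ∀ x : 𝔤, F ![x, u] = (B x e / β) * f := by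
    intro x
    rw [hFsw u x, ← hFs u x]
    have hx : B (Fs u) x = -((B x e / β) * f) := by
      conv_lhs => rw [coord x]
      simp only [map_add, map_smul, smul_eq_mul]
      rw [hFs u e, hFs u u, hFs u Xm, hFuu, hFum, hFue]
      ring
    rw [hx]; ring
  have hFxm : ∀ x : 𝔤, F ![x, Xm] = 0 := by
    intro x; rw [hFsw Xm x, hFXm x]; ring
  clear_value f
  ---- Part 5 : the ∇X₊ equation and X₊ = r Xm
  have hE2 : ∀ x z : 𝔤, B ⁅x, Xp⁆ z - B ⁅Xp, z⁆ x + B ⁅z, x⁆ Xp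
      = -H ![Xp, x, z] + 2 * F ![x, Jp z] := by
    intro x z
    have h := hK x Xp z
    rw [hNXp x] at h
    have h2 : B ((-(1 / 2 : ℝ)) • Hs Xp x - Jp (Fs x)) z
        = -(1 / 2) * H ![Xp, x, z] + F ![x, Jp z] := by
      rw [map_sub]
      simp only [map_smul, LinearMap.smul_apply, smul_eq_mul, LinearMap.sub_apply]
      rw [hHs, hJpskew (Fs x) z, hFs]
      ring
    rw [h2] at h
    linarith
  set p := B Xp e / β with hpdef
  set q := B Xp u / ε' with hqdef
  set r := B Xp Xm with hrdef
  have hXpc : Xp = p • e + q • u + r • Xm := coord Xp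
  clear_value p q r
  have hbeXp : ⁅e, Xp⁆ = (q * a) • u + (q * b) • Xm := by
    conv_lhs => rw [hXpc]
    rw [lie_add, lie_add, lie_smul, lie_smul, lie_smul, lie_self, heubr', heXm0]
    rw [smul_add, smul_smul, smul_smul]
    simp
  have hbuXp : ⁅u, Xp⁆ = (-(p * a)) • u + (-(p * b)) • Xm := by
    conv_lhs => rw [hXpc]
    rw [lie_add, lie_add, lie_smul, lie_smul, lie_smul, lie_self, huXm0]
    rw [hlieswap u e, heubr']
    module
  have hBeXpu : B ⁅e, Xp⁆ u = q * a * ε' := by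
    rw [hbeXp]
    simp only [map_add, map_smul, LinearMap.add_apply, LinearMap.smul_apply, smul_eq_mul]
    rw [← hε'def, hXmu]
    ring
  have hBuXpe : B ⁅u, Xp⁆ e = 0 := by
    rw [hbuXp]
    simp only [map_add, map_smul, LinearMap.add_apply, LinearMap.smul_apply, smul_eq_mul]
    rw [hue, hXme]
    ring
  have hF1 : F ![e, Jp u] = 0 := by
    rw [hFsw (Jp u) e, hFxe (Jp u), hJpB0 u]
    ring
  have hF2 : F ![u, Jp e] = 0 := by
    rw [hFsw (Jp e) u, hFxu (Jp e), hJpB0 e]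
    ring
  have hq0 : q = 0 := by
    have h1 := hE2 e u
    have h2 := hE2 u e
    have e1 : B ⁅Xp, u⁆ e = - B ⁅u, Xp⁆ e := hBneg Xp u e
    have e2 : B ⁅Xp, e⁆ u = - B ⁅e, Xp⁆ u := hBneg Xp e u
    have e3 : B ⁅u, e⁆ Xp = - B ⁅e, u⁆ Xp := hBneg u e Xp
    have e4 : H ![Xp, u, e] = -H ![Xp, e, u] := hH12 Xp e u
    have h3 : q * a * ε' = 0 := by
      rw [hF1] at h1
      rw [hF2] at h2
      linarith [h1, h2, e1, e2, e3, e4, hBeXpu, hBuXpe]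
    have h4 := (mul_eq_zero.mp h3).resolve_right hε'ne
    exact (mul_eq_zero.mp h4).resolve_right ha
  have hfJeu : B (Jp e) u * f = 0 := by
    have h3 := hE2 e e
    have e1 : ⁅e, Xp⁆ = (q * b) • Xm := by rw [hbeXp, hq0]; simp
    have e2 : B ⁅e, Xp⁆ e = 0 := by
      rw [e1]; simp only [map_smul, LinearMap.smul_apply, smul_eq_mul]; rw [hXme]; ring
    have e3 : B ⁅Xp, e⁆ e = 0 := by rw [hBneg Xp e e, e2]; ring
    have e4 : B ⁅e, e⁆ Xp = 0 := by rw [lie_self]; simp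
    have e5 : H ![Xp, e, e] = 0 :=
      H.map_eq_zero_of_eq ![Xp, e, e] (by simp) (by decide : (1 : Fin 3) ≠ 2)
    have e6 : F ![e, Jp e] = (B (Jp e) u / ε') * f := by
      rw [hFsw (Jp e) e, hFxe (Jp e)]; ring
    rw [e2, e3, e4, e5, e6] at h3
    have hz : (B (Jp e) u / ε') * f = 0 := by linarith
    have h2 : B (Jp e) u * f = ((B (Jp e) u / ε') * f) * ε' := by
      field_simp
    rw [hz, zero_mul] at h2
    exact h2
  have hp0 : p = 0 := by
    have h4 := hE2 u u
    have e1 : B ⁅u, Xp⁆ u = -(p * a) * ε' := by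
      rw [hbuXp]
      simp only [map_add, map_smul, LinearMap.add_apply, LinearMap.smul_apply, smul_eq_mul]
      rw [← hε'def, hXmu]
      ring
    have e2 : B ⁅Xp, u⁆ u = -B ⁅u, Xp⁆ u := hBneg Xp u u
    have e3 : B ⁅u, u⁆ Xp = 0 := by rw [lie_self]; simp
    have e4 : H ![Xp, u, u] = 0 :=
      H.map_eq_zero_of_eq ![Xp, u, u] (by simp) (by decide : (1 : Fin 3) ≠ 2)
    have e6 : B (Jp u) e = - B (Jp e) u := by
      rw [hJpskew u e, hBsymm u (Jp e)]
    have e5 : F ![u, Jp u] = 0 := by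
      have hval : F ![u, Jp u] = -((B (Jp u) e / β) * f) := by
        rw [hFsw (Jp u) u, hFxu (Jp u)]
        all_goals ring
      rw [hval, e6, neg_div, neg_mul, neg_neg, div_mul_eq_mul_div, hfJeu, zero_div]
    rw [e3, e4, e5] at h4
    have h5 : p * a * ε' = 0 := by linarith [h4, e1, e2]
    have h6 := (mul_eq_zero.mp h5).resolve_right hε'ne
    exact (mul_eq_zero.mp h6).resolve_right ha
  have hXpr : Xp = r • Xm := by
    rw [hXpc, hp0, hq0]; simp
  have hr2 : r * r = 1 := by
    have h := hXp
    rw [hXpr] at h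
    simp only [map_smul, LinearMap.smul_apply, smul_eq_mul] at h
    rw [hXm] at h
    linarith
  have hrpm : r = 1 ∨ r = -1 := mul_self_eq_one_iff.mp hr2
  have hrne : r ≠ 0 := by rcases hrpm with h | h <;> rw [h] <;> norm_num
  have hJpm : Jp Xm = 0 := by
    have h := hJpXp
    rw [hXpr, map_smul] at h
    exact (smul_eq_zero.mp h).resolve_left hrne
  ---- Part 6 : structure of Jp
  set β₁ := B (Jp u) e / β with hβ₁def
  set α₂ := B (Jp e) u / ε' with hα₂def
  have hJu : Jp u = β₁ • e := by
    have h := coord (Jp u)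
    rw [hJpB0 u] at h
    have h2 : B (Jp u) Xm = 0 := by rw [hJpskew u Xm, hJpm]; simp
    rw [h2] at h
    simpa using h
  have hJe : Jp e = α₂ • u := by
    have h := coord (Jp e)
    rw [hJpB0 e] at h
    have h2 : B (Jp e) Xm = 0 := by rw [hJpskew e Xm, hJpm]; simp
    rw [h2] at h
    simpa using h
  have hBeXp0 : B e Xp = 0 := by
    rw [hXpr]
    simp only [map_smul, smul_eq_mul]
    rw [heXm]; ring
  have hαβ : α₂ * β₁ = -1 := by
    have h := hJp2 e
    rw [hJe, map_smul, hJu, hBeXp0, smul_smul] at h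
    simp only [zero_smul, add_zero] at h
    have h2 : (α₂ * β₁ + 1) • e = 0 := by
      rw [add_smul, one_smul, h]; abel
    rcases smul_eq_zero.mp h2 with h' | h'
    · linarith
    · exact absurd h' hene
  have hβ₁ne : β₁ ≠ 0 := by
    intro h0; rw [h0, mul_zero] at hαβ; norm_num at hαβ
  have hskewJ : α₂ * ε' = -(β₁ * β) := by
    have h := hJpskew e u
    rw [hJu] at h
    simp only [map_smul, smul_eq_mul] at h
    rw [← hβdef] at h
    have h2 : B (Jp e) u = α₂ * ε' := by rw [hα₂def]; field_simp
    rw [h2] at h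
    linarith
  have hβval : β * β₁ ^ 2 = ε' := by
    have h1 : α₂ * β₁ + 1 = 0 := by linarith
    have h2 : α₂ * ε' + β₁ * β = 0 := by linarith
    linear_combination β₁ * h2 - ε' * h1
  clear_value β₁ α₂
  ---- Part 7 : b = 0
  have hbeXp0 : ⁅e, Xp⁆ = 0 := by rw [hXpr, lie_smul, heXm0, smul_zero]
  have hbuXp0 : ⁅u, Xp⁆ = 0 := by rw [hXpr, lie_smul, huXm0, smul_zero]
  have hb0 : b = 0 := by
    have h6 := hE2 u e
    have e1 : B ⁅u, Xp⁆ e = 0 := by rw [hbuXp0]; simp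
    have e2 : B ⁅Xp, e⁆ u = 0 := by rw [hBneg Xp e u, hbeXp0]; simp
    have hv1 : B ⁅e, u⁆ Xp = b * r := by
      rw [heubr', hXpr]
      simp only [map_add, map_smul, LinearMap.add_apply, LinearMap.smul_apply, smul_eq_mul]
      rw [humXm, hXm]
      ring
    have hv2 : H ![Xp, e, u] = -(b * r) := by
      have s1 : H ![Xp, e, u] = -H ![e, Xp, u] := hH01 e Xp u
      have s2 : H ![e, Xp, u] = -H ![e, u, Xp] := hH12 e u Xp
      have s3 : H ![e, u, Xp] = B (Hs e u) Xp := (hHs e u Xp).symm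
      have s4 : B (Hs e u) Xp = r * H ![e, u, Xm] := by
        rw [hXpr]
        simp only [map_smul, smul_eq_mul]
        rw [hHs]
      have s5 : H ![e, u, Xm] = -H ![e, Xm, u] := hH12 e Xm u
      have s6 : H ![e, Xm, u] = B ⁅e, u⁆ Xm := hB3 e u
      have s7 : B ⁅e, u⁆ Xm = b := by
        rw [heubr']
        simp only [map_add, map_smul, LinearMap.add_apply, LinearMap.smul_apply, smul_eq_mul]
        rw [humXm, hXm]
        ring
      rw [s1, s2, s3, s4, s5, s6, s7]
      ring
    have e3 : B ⁅e, u⁆ Xp = -(B ⁅u, e⁆ Xp) := by rw [hBneg e u Xp]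
    have e4 : H ![Xp, u, e] = -H ![Xp, e, u] := hH12 Xp e u
    have h7 : b * r = 0 := by
      rw [e1, e2, e4, hv2, hF2] at h6
      have : B ⁅e, u⁆ Xp = b * r := hv1
      linarith [hBneg u e Xp, hv1]
    exact (mul_eq_zero.mp h7).resolve_right hrne
  have hbr2 : ⁅e, u⁆ = a • u := by rw [heubr', hb0]; simp
  ---- Part 8 : H = 0 and F = 0
  have hHeum : H ![e, u, Xm] = 0 := by
    have s5 : H ![e, u, Xm] = -H ![e, Xm, u] := hH12 e Xm u
    have s6 : H ![e, Xm, u] = B ⁅e, u⁆ Xm := hB3 e u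
    have s7 : B ⁅e, u⁆ Xm = 0 := by
      rw [hbr2]
      simp only [map_smul, LinearMap.smul_apply, smul_eq_mul]
      rw [humXm]; ring
    rw [s5, s6, s7]; ring
  have hH0 : H = 0 := by
    apply Module.Basis.ext_alternating w₀
    intro v hv
    have hcomp : (fun i => w₀ (v i))
        = ⇑w₀ ∘ ⇑(Equiv.ofBijective v ((Finite.injective_iff_bijective).mp hv)) := by
      funext i; rfl
    rw [hcomp, AlternatingMap.map_perm]
    have hzero : H ⇑w₀ = 0 := by rw [hw₀]; exact hHeum
    simp [hzero]
  have hbM : ∀ x z : 𝔤, B ⁅x, z⁆ Xm = 0 := by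
    intro x z
    rw [← hB3 x z, hH0]
    simp
  have hHs0 : ∀ x y : 𝔤, Hs x y = 0 := by
    intro x y
    apply hBnd
    intro z
    rw [hHs, hH0]
    simp
  have hJpFs : ∀ x : 𝔤, Jp (Fs x) = 0 := by
    intro x
    have hNx : N x Xp = -(Jp (Fs x)) := by
      rw [hNXp x, hHs0]
      simp
    apply hBnd
    intro z
    have h := hK x Xp z
    rw [hNx] at h
    have e1 : B ⁅x, Xp⁆ z = 0 := by
      rw [hXpr, lie_smul, hcent x, smul_zero]; simp
    have e2 : B ⁅Xp, z⁆ x = 0 := by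
      rw [hBneg Xp z x, hXpr, lie_smul, hcent z, smul_zero]; simp
    have e3 : B ⁅z, x⁆ Xp = 0 := by
      rw [hXpr]
      simp only [map_smul, smul_eq_mul]
      rw [hbM z x]; ring
    rw [e1, e2, e3] at h
    have : B (-(Jp (Fs x))) z = 0 := by linarith
    simpa using this
  have hFJ : ∀ x z : 𝔤, F ![x, Jp z] = 0 := by
    intro x z
    have h := hJpskew (Fs x) z
    rw [hJpFs x] at h
    simp only [map_zero, LinearMap.zero_apply] at h
    rw [← hFs x (Jp z)]
    linarith
  have hFxe0 : ∀ x : 𝔤, F ![x, e] = 0 := by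
    intro x
    have h2 : Jp (Jp e) = -e := by rw [hJp2 e, hBeXp0]; simp
    have h3 := hFJ x (Jp e)
    rw [h2] at h3
    rw [← hFs] at h3 ⊢
    simpa using h3
  have hFxu0 : ∀ x : 𝔤, F ![x, u] = 0 := by
    intro x
    have hBuXp0 : B u Xp = 0 := by
      rw [hXpr]
      simp only [map_smul, smul_eq_mul]
      rw [humXm]; ring
    have h2 : Jp (Jp u) = -u := by rw [hJp2 u, hBuXp0]; simp
    have h3 := hFJ x (Jp u)
    rw [h2] at h3
    rw [← hFs] at h3 ⊢
    simpa using h3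
  have hFall : ∀ x y : 𝔤, F ![x, y] = 0 := by
    intro x y
    rw [← hFs]
    conv_lhs => rw [coord y]
    simp only [map_add, map_smul, smul_eq_mul]
    rw [hFs x e, hFs x u, hFs x Xm, hFxe0 x, hFxu0 x, hFxm x]
    ring
  have hF0 : F = 0 := by
    apply AlternatingMap.ext
    intro v
    have hveta : v = ![v 0, v 1] := by
      funext i; fin_cases i <;> rfl
    have : F v = F ![v 0, v 1] := by rw [← hveta]
    rw [this, hFall]
    simp
  ---- Part 9 : assemble
  have li3' := indep (a⁻¹ • e) (smul_ne_zero (inv_ne_zero ha) hene)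
    (by simp only [map_smul, LinearMap.smul_apply, smul_eq_mul]; rw [heu]; ring)
    (by simp only [map_smul, LinearMap.smul_apply, smul_eq_mul]; rw [heXm]; ring)
  set w := basisOfLinearIndependentOfCardEqFinrank li3' hcard with hwdef
  have hwc : ⇑w = ![a⁻¹ • e, u, Xm] := coe_basisOfLinearIndependentOfCardEqFinrank li3' hcard
  have hwe : w 0 = a⁻¹ • e := by rw [hwc]; rfl
  have hwu : w 1 = u := by rw [hwc]; rfl
  have hwm : w 2 = Xm := by rw [hwc]; rfl
  refine ⟨hH0, hF0, w, β₁ * a, ε', ε', mul_ne_zero hβ₁ne ha, hε'pm, hε'pm,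
    ?_, ?_, ?_, ?_, ?_, ?_, ?_, ?_, ?_⟩
  · -- orthogonality
    intro i j hij
    have g01 : B (a⁻¹ • e) u = 0 := by
      simp only [map_smul, LinearMap.smul_apply, smul_eq_mul]; rw [heu]; ring
    have g02 : B (a⁻¹ • e) Xm = 0 := by
      simp only [map_smul, LinearMap.smul_apply, smul_eq_mul]; rw [heXm]; ring
    have g10 : B u (a⁻¹ • e) = 0 := by rw [hBsymm]; exact g01
    have g20 : B Xm (a⁻¹ • e) = 0 := by rw [hBsymm]; exact g02
    fin_cases i <;> fin_cases j
    · exact absurd rfl hij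
    · show B (w 0) (w 1) = 0
      rw [hwe, hwu]; exact g01
    · show B (w 0) (w 2) = 0
      rw [hwe, hwm]; exact g02
    · show B (w 1) (w 0) = 0
      rw [hwe, hwu]; exact g10
    · exact absurd rfl hij
    · show B (w 1) (w 2) = 0
      rw [hwu, hwm]; exact humXm
    · show B (w 2) (w 0) = 0
      rw [hwe, hwm]; exact g20
    · show B (w 2) (w 1) = 0
      rw [hwm, hwu]; exact hXmu
    · exact absurd rfl hij
  · rw [hwe, hwu, smul_lie, hbr2, smul_smul, inv_mul_cancel₀ ha, one_smul]
  · rw [hwe, hwm, smul_lie, heXm0, smul_zero]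
  · rw [hwu, hwm]; exact huXm0
  · rw [hwe]
    simp only [map_smul, LinearMap.smul_apply, smul_eq_mul]
    rw [← hβdef]
    have h2 : ((β₁ * a) ^ 2 : ℝ) ≠ 0 := pow_ne_zero _ (mul_ne_zero hβ₁ne ha)
    rw [eq_div_iff h2]
    have h3 : a⁻¹ * (a⁻¹ * β) * (β₁ * a) ^ 2 = β * β₁ ^ 2 := by
      field_simp
    rw [h3, hβval]
  · rw [hwu]; exact hε'def.symm
  · rw [hwm]; exact hXm
  · exact hwm.symm
  · rcases hrpm with h | h
    · left; rw [hXpr, h, one_smul, hwm]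
    · right; rw [hXpr, h, hwm, neg_smul, one_smul]
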